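/- A graph in which every cycle of length at least four has a chord (a chordal graph) that is formed as the union of two chordal graphs whose intersection is a complete graph is itself chordal. -/

import Mathlib

/-- A simple graph is *chordal* if every cycle of length at least four has a chord,
that is, an edge of the graph joining two vertices of the cycle that is not an
edge of the cycle. -/
def SimpleGraph.IsChordal {V : Type*} (G : SimpleGraph V) : Prop :=
  ∀ ⦃v : V⦄ (w : G.Walk v v), w.IsCycle → 4 ≤ w.length →
    ∃ a b, a ∈ w.support ∧ b ∈ w.support ∧ G.Adj a b ∧ s(a, b) ∉ w.edges

private lemma walk_lift {V : Type*} {G : SimpleGraph V} {S : Set V} :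
    ∀ {u v : V} (w : G.Walk u v) (hu : u ∈ S) (hv : v ∈ S),
      (∀ x ∈ w.support, x ∈ S) →
      ∃ p : (G.induce S).Walk ⟨u, hu⟩ ⟨v, hv⟩,
        p.map (⟨Subtype.val, id⟩ : G.induce S →g G) = w := by
  intro u v w
  induction w with
  | nil => exact fun hu hv _ => ⟨.nil, rfl⟩
  | @cons u z v' hadj q ih =>
    intro hu hv h
    have hz : z ∈ S := h z (by simp)
    obtain ⟨p, hp⟩ := ih hz hv (fun x hx => h x (by simp [hx]))
    have hadj' : (G.induce S).Adj ⟨u, hu⟩ ⟨z, hz⟩ := by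
      rw [SimpleGraph.comap_adj]
      exact hadj
    exact ⟨.cons hadj' p, by simp [hp]⟩

private lemma aux_chord {V : Type*} {G : SimpleGraph V} {S : Set V}
    (hch : (G.induce S).IsChordal) {v : V} (w : G.Walk v v)
    (hc : w.IsCycle) (hlen : 4 ≤ w.length) (hS : ∀ x ∈ w.support, x ∈ S) :
    ∃ a b, a ∈ w.support ∧ b ∈ w.support ∧ G.Adj a b ∧ s(a, b) ∉ w.edges := by
  have hv : v ∈ S := hS v w.start_mem_support
  obtain ⟨p, hp⟩ := walk_lift w hv hv hS
  have hinj : Function.Injective (⟨Subtype.val, id⟩ : G.induce S →g G) :=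
    Subtype.val_injective
  have hpc : p.IsCycle := by
    rw [← SimpleGraph.Walk.map_isCycle_iff_of_injective hinj, hp]; exact hc
  have hpl : 4 ≤ p.length := by
    rw [← SimpleGraph.Walk.length_map (f := (⟨Subtype.val, id⟩ : G.induce S →g G)), hp]
    exact hlen
  obtain ⟨a, b, ha, hb, hab, hnab⟩ := hch p hpc hpl
  refine ⟨a.val, b.val, ?_, ?_, hab, ?_⟩
  · rw [← hp, SimpleGraph.Walk.support_map]; exact List.mem_map_of_mem ha
  · rw [← hp, SimpleGraph.Walk.support_map]; exact List.mem_map_of_mem hb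
  · intro hmem
    rw [← hp, SimpleGraph.Walk.edges_map] at hmem
    obtain ⟨e, he, hee⟩ := List.mem_map.mp hmem
    have : e = s(a, b) := Sym2.map.injective hinj (by exact hee)
    exact hnab (this ▸ he)

private lemma mem_support_rotate_iff {V : Type*} [DecidableEq V] {G : SimpleGraph V} {u v y : V}
    {c : G.Walk v v} (h : u ∈ c.support) :
    y ∈ (c.rotate u h).support ↔ y ∈ c.support := by
  unfold SimpleGraph.Walk.rotate
  rw [SimpleGraph.Walk.mem_support_append_iff, or_comm,
    ← SimpleGraph.Walk.mem_support_append_iff, SimpleGraph.Walk.take_spec]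

/-- **Dirac's theorem on clique sums.** If a graph `G` is the union of two induced
subgraphs on `S₁` and `S₂` (every edge lies within `S₁` or within `S₂`), each of
which is chordal, and the intersection `S₁ ∩ S₂` induces a complete graph, then
`G` is chordal. -/
theorem isChordal_of_union_of_inter_complete {V : Type*} (G : SimpleGraph V)
    (S₁ S₂ : Set V) (hcover : S₁ ∪ S₂ = Set.univ)
    (hedge : ∀ a b : V, G.Adj a b → (a ∈ S₁ ∧ b ∈ S₁) ∨ (a ∈ S₂ ∧ b ∈ S₂))
    (h₁ : (G.induce S₁).IsChordal) (h₂ : (G.induce S₂).IsChordal)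
    (hcomplete : (S₁ ∩ S₂).Pairwise G.Adj) :
    G.IsChordal := by
  classical
  intro v w hc hlen
  have hmemS : ∀ z : V, z ∈ S₁ ∪ S₂ := fun z => hcover ▸ Set.mem_univ z
  by_cases hA : ∀ x ∈ w.support, x ∈ S₁
  · exact aux_chord h₁ w hc hlen hA
  by_cases hB : ∀ x ∈ w.support, x ∈ S₂
  · exact aux_chord h₂ w hc hlen hB
  push_neg at hA hB
  obtain ⟨y, hyw, hy1⟩ := hA
  obtain ⟨x, hxw, hx2⟩ := hB
  have hy2 : y ∈ S₂ := (hmemS y).resolve_left hy1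
  have hx1 : x ∈ S₁ := (hmemS x).resolve_right hx2
  set w' := w.rotate x hxw with hw'
  have hc' : w'.IsCycle := hc.rotate hxw
  have hyw' : y ∈ w'.support := (mem_support_rotate_iff hxw).mpr hyw
  set arc1 := w'.takeUntil y hyw' with harc1
  set arc2 := w'.dropUntil y hyw' with harc2
  have hspec : arc1.append arc2 = w' := w'.take_spec hyw'
  -- boundary vertex on arc1 (from x to y), crossing out of S₁
  obtain ⟨d, hd, hd1, hd2⟩ := arc1.exists_boundary_dart S₁ hx1 hy1
  have ha2 : d.fst ∈ S₂ ∧ d.snd ∈ S₂ := (hedge _ _ d.adj).resolve_left (fun h => hd2 h.2)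
  set a := d.fst with ha_def
  have ha_arc : a ∈ arc1.support := arc1.dart_fst_mem_support_of_mem_darts hd
  have hax : a ≠ x := fun h => hx2 (h ▸ ha2.1)
  have hay : a ≠ y := fun h => hy1 (h ▸ hd1)
  -- boundary vertex on arc2 (from y to x), crossing out of S₂
  obtain ⟨d', hd', hd'1, hd'2⟩ := arc2.exists_boundary_dart S₂ hy2 hx2
  have hb1 : d'.fst ∈ S₁ ∧ d'.snd ∈ S₁ := (hedge _ _ d'.adj).resolve_right (fun h => hd'2 h.2)
  set b := d'.fst with hb_def
  have hb_arc : b ∈ arc2.support := arc2.dart_fst_mem_support_of_mem_darts hd'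
  have hbx : b ≠ x := fun h => hx2 (h ▸ hd'1)
  have hby : b ≠ y := fun h => hy1 (h ▸ hb1.1)
  -- tail memberships
  have ha_tail : a ∈ arc1.support.tail := by
    have := ha_arc
    rw [arc1.support_eq_cons] at this
    exact (List.mem_cons.mp this).resolve_left hax
  have hb_tail : b ∈ arc2.support.tail := by
    have := hb_arc
    rw [arc2.support_eq_cons] at this
    exact (List.mem_cons.mp this).resolve_left hby
  -- disjointness of the two tails
  have hnd : w'.support.tail.Nodup := hc'.support_nodup
  rw [← hspec, SimpleGraph.Walk.tail_support_append] at hnd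
  have hdisj : arc1.support.tail.Disjoint arc2.support.tail :=
    List.disjoint_of_nodup_append hnd
  have hab_ne : a ≠ b := fun h => hdisj ha_tail (h ▸ hb_tail)
  refine ⟨a, b, ?_, ?_, hcomplete ⟨hd1, ha2.1⟩ ⟨hb1.1, hd'1⟩ hab_ne, ?_⟩
  · exact (mem_support_rotate_iff hxw).mp (w'.support_takeUntil_subset hyw' ha_arc)
  · exact (mem_support_rotate_iff hxw).mp (w'.support_dropUntil_subset hyw' hb_arc)
  · intro hmem
    have hmem' : s(a, b) ∈ w'.edges := (w.rotate_edges x hxw).mem_iff.mpr hmem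
    rw [← hspec, SimpleGraph.Walk.edges_append] at hmem'
    rcases List.mem_append.mp hmem' with h | h
    · have hb1' : b ∈ arc1.support := arc1.snd_mem_support_of_mem_edges h
      rw [arc1.support_eq_cons] at hb1'
      exact hdisj ((List.mem_cons.mp hb1').resolve_left hbx) hb_tail
    · have ha2' : a ∈ arc2.support := arc2.fst_mem_support_of_mem_edges h
      rw [arc2.support_eq_cons] at ha2'
      exact hdisj ha_tail ((List.mem_cons.mp ha2').resolve_left hay)
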